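/- If λ is an eigenvalue of the 2N×2N periodic Jacobi matrix Q(b,a), then −λ is an eigenvalue of Q(S̃(b,a)). Concretely: if v ∈ ℂ^{2N} satisfies Q(b,a)v = λv, then the vector w defined by w_k = (−1)^{k+1} v_{σ(k)} for a suitable index permutation σ satisfies Q(S̃(b,a))w = −λw. -/

import Mathlib

open Fin.CommRing

section aux
variable {M : ℕ} [NeZero M]

lemma tridiag_mulVec (hM : 3 ≤ M) (d u : Fin M → ℝ) (x : Fin M → ℂ) (k : Fin M) :
    ((Matrix.of fun i j : Fin M =>
        if i = j then d i else if j = i + 1 then u i else if i = j + 1 then u j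
        else 0).map (Complex.ofReal)).mulVec x k
      = (d k : ℂ) * x k + (u k : ℂ) * x (k + 1) + (u (k - 1) : ℂ) * x (k - 1) := by
  have h1M : 1 % M = 1 := Nat.mod_eq_of_lt (by omega)
  have h1 : (1 : Fin M) ≠ 0 := by
    intro h
    have h' := congrArg Fin.val h
    rw [Fin.val_one', Fin.val_zero, h1M] at h'
    omega
  have h2 : (1 : Fin M) + 1 ≠ 0 := by
    intro h
    have h' := congrArg Fin.val h
    rw [Fin.val_add, Fin.val_one', Fin.val_zero, h1M] at h'
    have h2M : (1 + 1) % M = 2 := Nat.mod_eq_of_lt (by omega)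
    rw [h2M] at h'
    omega
  have hka : k ≠ k + 1 := by
    intro h; apply h1; have e : (1 : Fin M) = (k + 1) - k := by ring
    rw [e, ← h]; ring
  have hkb : k ≠ k - 1 := by
    intro h; apply h1; have e : (1 : Fin M) = k - (k - 1) := by ring
    rw [e, ← h]; ring
  have hab : k + 1 ≠ k - 1 := by
    intro h; apply h2; have e : (1 : Fin M) + 1 = (k + 1) - (k - 1) := by ring
    rw [e, h]; ring
  have hpt : ∀ j : Fin M,
      (((Matrix.of fun i j : Fin M =>
        if i = j then d i else if j = i + 1 then u i else if i = j + 1 then u j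
        else 0).map (Complex.ofReal)) k j) * x j
      = (if j = k then (d k : ℂ) * x k else 0)
        + (if j = k + 1 then (u k : ℂ) * x (k + 1) else 0)
        + (if j = k - 1 then (u (k - 1) : ℂ) * x (k - 1) else 0) := by
    intro j
    simp only [Matrix.map_apply, Matrix.of_apply]
    by_cases hjk : j = k
    · subst hjk
      rw [if_pos rfl, if_pos rfl, if_neg hka, if_neg hkb]
      ring
    · rw [if_neg (fun h : k = j => hjk h.symm), if_neg hjk]
      by_cases hj1 : j = k + 1
      · subst hj1
        rw [if_pos rfl, if_pos rfl, if_neg hab]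
        ring
      · rw [if_neg hj1, if_neg hj1]
        by_cases hj2 : j = k - 1
        · subst hj2
          have hk : k = (k - 1) + 1 := by ring
          rw [if_pos hk, if_pos rfl]
          ring
        · have hk' : ¬ k = j + 1 := by
            intro h; apply hj2; rw [h]; ring
          rw [if_neg hk', if_neg hj2]
          simp
  simp only [Matrix.mulVec, dotProduct]
  rw [Finset.sum_congr rfl (fun j _ => hpt j)]
  simp [Finset.sum_add_distrib, Finset.sum_ite_eq']

end aux


private def iotaHom (N : ℕ) [NeZero N] [NeZero (2 * N)] : Fin (2 * N) →+ Fin N :=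
  AddMonoidHom.mk' (fun i => ⟨(i : ℕ) % N, Nat.mod_lt _ (Nat.pos_of_ne_zero (NeZero.ne N))⟩)
    (by
      intro i j
      apply Fin.ext
      show ((i + j : Fin (2 * N)) : ℕ) % N = ((i : ℕ) % N + (j : ℕ) % N) % N
      rw [Fin.val_add, Nat.mod_mod_of_dvd _ (dvd_mul_left N 2), Nat.add_mod])

private lemma sgn_succ {M : ℕ} [NeZero M] (hM : 2 ≤ M) (hM2 : 2 ∣ M) (k : Fin M) :
    (-1 : ℂ) ^ (((k + 1 : Fin M) : ℕ) + 1) = -(-1 : ℂ) ^ ((k : ℕ) + 1) := by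
  have hval : ((k + 1 : Fin M) : ℕ) = ((k : ℕ) + 1) % M := by
    rw [Fin.val_add, Fin.val_one', Nat.mod_eq_of_lt (show 1 < M by omega)]
  have hp : ((((k : ℕ) + 1) % M) + 1) % 2 = ((k : ℕ) + 2) % 2 := by
    have := Nat.mod_mod_of_dvd ((k : ℕ) + 1) hM2
    omega
  rw [hval, neg_one_pow_eq_pow_mod_two, hp, ← neg_one_pow_eq_pow_mod_two,
    show (k : ℕ) + 2 = ((k : ℕ) + 1) + 1 from rfl, pow_succ]
  ring

/-- If `λ` is an eigenvalue of the `2N×2N` periodic Jacobi matrix `Q(b,a)`, then `−λ`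
is an eigenvalue of `Q(S̃(b,a))`; concretely, from an eigenvector `v ∈ ℂ^{2N}` one gets
an eigenvector `w` with `w_k = (−1)^{k+1} v_{σ(k)}` for a suitable index permutation `σ`. -/
theorem spec_Q_reversal (N : ℕ) [NeZero N] [NeZero (2 * N)] (hN : 2 ≤ N)
    (b a : Fin N → ℝ) (ha : ∀ j, 0 < a j)
    (Q : (Fin N → ℝ) → (Fin N → ℝ) → Matrix (Fin (2 * N)) (Fin (2 * N)) ℝ)
    (hQ : ∀ b' a' : Fin N → ℝ, Q b' a' = Matrix.of fun i j : Fin (2 * N) =>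
      if i = j then b' ⟨(i : ℕ) % N, Nat.mod_lt _ (by omega)⟩
      else if j = i + 1 then a' ⟨(i : ℕ) % N, Nat.mod_lt _ (by omega)⟩
      else if i = j + 1 then a' ⟨(j : ℕ) % N, Nat.mod_lt _ (by omega)⟩
      else 0)
    (Sb Sa : Fin N → ℝ)
    (hSb : ∀ j, Sb j = -b (-(j + 2))) (hSa : ∀ j, Sa j = a (-(j + 3)))
    (lam : ℂ) (v : Fin (2 * N) → ℂ) (hv : v ≠ 0)
    (hev : ((Q b a).map (Complex.ofReal)).mulVec v = lam • v) :
    ∃ σ : Equiv.Perm (Fin (2 * N)),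
      (fun k : Fin (2 * N) => (-1 : ℂ) ^ ((k : ℕ) + 1) * v (σ k)) ≠ 0 ∧
      ((Q Sb Sa).map (Complex.ofReal)).mulVec
          (fun k : Fin (2 * N) => (-1 : ℂ) ^ ((k : ℕ) + 1) * v (σ k)) =
        (-lam) • fun k : Fin (2 * N) => (-1 : ℂ) ^ ((k : ℕ) + 1) * v (σ k) := by
  set ι := iotaHom N with hι
  -- basic values of ι
  have hone : ι (1 : Fin (2 * N)) = 1 := by
    apply Fin.ext
    show ((1 : Fin (2 * N)) : ℕ) % N = ((1 : Fin N) : ℕ)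
    rw [Fin.val_one', Fin.val_one', Nat.mod_mod_of_dvd _ (dvd_mul_left N 2)]
  have htwo : ι (2 : Fin (2 * N)) = 2 := by
    rw [show (2 : Fin (2 * N)) = 1 + 1 by norm_num, map_add, hone]
    norm_num
  -- row formula for Q
  have hm : ∀ (b' a' : Fin N → ℝ) (x : Fin (2 * N) → ℂ) (k : Fin (2 * N)),
      ((Q b' a').map (Complex.ofReal)).mulVec x k
        = (b' (ι k) : ℂ) * x k + (a' (ι k) : ℂ) * x (k + 1)
          + (a' (ι (k - 1)) : ℂ) * x (k - 1) := by
    intro b' a' x k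
    rw [hQ]
    exact tridiag_mulVec (by omega) (fun i => b' (ι i)) (fun i => a' (ι i)) x k
  -- eigen equation componentwise
  have E : ∀ m : Fin (2 * N),
      (b (ι m) : ℂ) * v m + (a (ι m) : ℂ) * v (m + 1) + (a (ι (m - 1)) : ℂ) * v (m - 1)
        = lam * v m := by
    intro m
    have h := congrFun hev m
    rw [hm b a v m] at h
    simpa using h
  refine ⟨(Equiv.addRight (2 : Fin (2 * N))).trans (Equiv.neg _), ?_, ?_⟩
  · intro h0
    apply hv
    funext m
    have h := congrFun h0 (-(m + 2))
    simp only [Equiv.trans_apply, Equiv.coe_addRight, Equiv.neg_apply, Pi.zero_apply] at h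
    have hsig : (-(m + 2) + 2 : Fin (2 * N)) = -m := by ring
    rw [hsig, neg_neg] at h
    rcases mul_eq_zero.mp h with h | h
    · exact absurd h (pow_ne_zero _ (by norm_num))
    · exact h
  · funext k
    rw [hm Sb Sa _ k]
    simp only [Equiv.trans_apply, Equiv.coe_addRight, Equiv.neg_apply, Pi.smul_apply,
      smul_eq_mul, hSb, hSa]
    have e1 : -(ι k + 2) = ι (-(k + 2)) := by
      rw [map_neg, map_add, htwo]
    have e2 : -(ι k + 3) = ι (-(k + 2) - 1) := by
      rw [map_sub, map_neg, map_add, htwo, hone]; ring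
    have e3 : -(ι (k - 1) + 3) = ι (-(k + 2)) := by
      rw [map_neg, map_add, map_sub, htwo, hone]; ring
    rw [e1, e2, e3]
    have a1 : -(k + 1 + 2) = -(k + 2) - 1 := by ring
    have a2 : -(k - 1 + 2) = -(k + 2) + 1 := by ring
    rw [a1, a2]
    have s1 : (-1 : ℂ) ^ (((k + 1 : Fin (2 * N)) : ℕ) + 1) = -(-1 : ℂ) ^ ((k : ℕ) + 1) :=
      sgn_succ (by omega) (dvd_mul_right 2 N) k
    have s2 : (-1 : ℂ) ^ (((k - 1 : Fin (2 * N)) : ℕ) + 1) = -(-1 : ℂ) ^ ((k : ℕ) + 1) := by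
      have h := sgn_succ (M := 2 * N) (by omega) (dvd_mul_right 2 N) (k - 1)
      rw [sub_add_cancel] at h
      linear_combination h
    rw [s1, s2]
    push_cast
    linear_combination (-(-1 : ℂ) ^ ((k : ℕ) + 1)) * E (-(k + 2))
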